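/- Let d = ((d_i^+, d_i^-))_{i=1}^N be a digraphic integer-pair sequence and suppose there exist three distinct coordinates such that in every realization G ∈ R(d) the corresponding three vertices induce a directed 3-cycle. Then there exist distinct coordinates j_1, j_2, j_3 and an integer pair (k,l) with k ≥ 1 and l ≥ 1 such that: (1) d_{j_1} = d_{j_2} = d_{j_3} = (k,l); (2) in the positive lexicographical ordering d̄ of d, coordinates l, l+1, l+2 equal (k,l), and in the negative lexicographical ordering d̲ of d, coordinates k, k+1, k+2 equal (k,l); and (3) the slack sequences satisfy (s̄_{l-1}, s̄_l, s̄_{l+1}, s̄_{l+2}) = (0,1,1,0) and (s̲_{k-1}, s̲_k, s̲_{k+1}, s̲_{k+2}) = (0,1,1,0). -/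

import Mathlib

/-- A simple directed graph on vertex set `V`: an irreflexive (Boolean) arc
relation, i.e. no self-loops and at most one arc in each direction. -/
structure SDigraph (V : Type) where
  Adj : V → V → Bool
  irrefl : ∀ v, Adj v v = false

/-- Out-degree of a vertex. -/
def SDigraph.outDeg {V : Type} [Fintype V] [DecidableEq V]
    (G : SDigraph V) (v : V) : ℕ :=
  (Finset.univ.filter fun x => G.Adj v x = true).card

/-- In-degree of a vertex. -/
def SDigraph.inDeg {V : Type} [Fintype V] [DecidableEq V]
    (G : SDigraph V) (v : V) : ℕ :=
  (Finset.univ.filter fun x => G.Adj x v = true).card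

/-- `G` realizes the integer-pair (degree) sequence `d`: vertex `v` has
out-degree `(d v).1` and in-degree `(d v).2`. -/
def Realizes {V : Type} [Fintype V] [DecidableEq V]
    (G : SDigraph V) (d : V → ℕ × ℕ) : Prop :=
  ∀ v, G.outDeg v = (d v).1 ∧ G.inDeg v = (d v).2

/-- `H` is obtained from `G` by a single 2-switch: arcs `(v₁,v₂)`, `(v₃,v₄)`
are replaced by `(v₁,v₄)`, `(v₃,v₂)`, allowed only when the four vertices
are distinct, the former two are arcs and the latter two are not. -/
def TwoSwitch {V : Type} [DecidableEq V] (G H : SDigraph V) : Prop :=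
  ∃ v₁ v₂ v₃ v₄ : V,
    v₁ ≠ v₂ ∧ v₁ ≠ v₃ ∧ v₁ ≠ v₄ ∧ v₂ ≠ v₃ ∧ v₂ ≠ v₄ ∧ v₃ ≠ v₄ ∧
    G.Adj v₁ v₂ = true ∧ G.Adj v₃ v₄ = true ∧
    G.Adj v₁ v₄ = false ∧ G.Adj v₃ v₂ = false ∧
    ∀ x y, H.Adj x y =
      if (x = v₁ ∧ y = v₂) ∨ (x = v₃ ∧ y = v₄) then false
      else if (x = v₁ ∧ y = v₄) ∨ (x = v₃ ∧ y = v₂) then true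
      else G.Adj x y

/-- `G` and `H` differ by a single 2-switch (in either direction). -/
def TwoSwitchStep {V : Type} [DecidableEq V] (G H : SDigraph V) : Prop :=
  TwoSwitch G H ∨ TwoSwitch H G

/-- `H` is reachable from `G` by a finite sequence of 2-switches. -/
def Reach2 {V : Type} [DecidableEq V] (G H : SDigraph V) : Prop :=
  Relation.ReflTransGen TwoSwitchStep G H

/-- `H` is obtained from `G` by reorienting an induced directed 3-cycle:
there are distinct `u v w` with arcs `(u,v),(v,w),(w,u)` and no arcs
`(v,u),(w,v),(u,w)`, and `H` replaces these three arcs by the reversed ones. -/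
def CycleReorient {V : Type} [DecidableEq V] (G H : SDigraph V) : Prop :=
  ∃ u v w : V, u ≠ v ∧ v ≠ w ∧ u ≠ w ∧
    G.Adj u v = true ∧ G.Adj v w = true ∧ G.Adj w u = true ∧
    G.Adj v u = false ∧ G.Adj w v = false ∧ G.Adj u w = false ∧
    ∀ x y, H.Adj x y =
      if (x = u ∨ x = v ∨ x = w) ∧ (y = u ∨ y = v ∨ y = w) then G.Adj y x
      else G.Adj x y

/-- The three vertices `u, v, w` induce a directed 3-cycle in `G`: the induced
subgraph on them consists of exactly the three arcs of one cyclic orientation. -/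
def InducesC3 {V : Type} (G : SDigraph V) (u v w : V) : Prop :=
  (G.Adj u v = true ∧ G.Adj v w = true ∧ G.Adj w u = true ∧
    G.Adj v u = false ∧ G.Adj w v = false ∧ G.Adj u w = false) ∨
  (G.Adj v u = true ∧ G.Adj w v = true ∧ G.Adj u w = true ∧
    G.Adj u v = false ∧ G.Adj v w = false ∧ G.Adj w u = false)

/-- The digraph obtained from `G` by reversing all arcs among `{u, v, w}`
(and leaving all other arcs unchanged).  When `{u,v,w}` induces a directed
3-cycle in `G`, this is exactly the reorientation of that 3-cycle. -/
def flip3 {V : Type} [DecidableEq V] (G : SDigraph V) (u v w : V) : SDigraph V where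
  Adj x y :=
    if (x = u ∨ x = v ∨ x = w) ∧ (y = u ∨ y = v ∨ y = w) then G.Adj y x
    else G.Adj x y
  irrefl := by
    intro x
    beta_reduce
    rw [ite_self]
    exact G.irrefl x

/-- The corrected conjugate sequence of an integer sequence `a` (indexed by
`Fin N`, thought of as positions `1, …, N`), at (1-based) position `k`:
`a''_k = |{i : i < k, a_i ≥ k-1}| + |{i : i > k, a_i ≥ k}|`. -/
def cconj {N : ℕ} (a : Fin N → ℕ) (k : ℕ) : ℕ :=
  (Finset.univ.filter fun i : Fin N => (i : ℕ) + 1 < k ∧ k - 1 ≤ a i).card +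
  (Finset.univ.filter fun i : Fin N => k < (i : ℕ) + 1 ∧ k ≤ a i).card

/-- The slack sequence `s̄` of a pair sequence `a` (intended: the positively
ordered sequence `d̄`): `s̄_l = Σ_{i=1}^l [a⁻]''_i − Σ_{i=1}^l a⁺_i`, where
`a⁺, a⁻` are the first- and second-coordinate sequences.  `s̄_0 = 0`. -/
def slackBar {N : ℕ} (a : Fin N → ℕ × ℕ) (l : ℕ) : ℤ :=
  (∑ i ∈ Finset.range l, (cconj (fun j => (a j).2) (i + 1) : ℤ)) -
  ∑ j ∈ Finset.univ.filter (fun j : Fin N => (j : ℕ) < l), ((a j).1 : ℤ)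

/-- The slack sequence `s̲` of a pair sequence `a` (intended: the negatively
ordered sequence `d̲`): `s̲_k = Σ_{i=1}^k [a⁺]''_i − Σ_{i=1}^k a⁻_i`.
`s̲_0 = 0`. -/
def slackUbar {N : ℕ} (a : Fin N → ℕ × ℕ) (k : ℕ) : ℤ :=
  (∑ i ∈ Finset.range k, (cconj (fun j => (a j).1) (i + 1) : ℤ)) -
  ∑ j ∈ Finset.univ.filter (fun j : Fin N => (j : ℕ) < k), ((a j).2 : ℤ)

/-- `a` is non-increasing in the positive lexicographical order (first
coordinate first, ties broken by the second coordinate). -/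
def PosOrdered {N : ℕ} (a : Fin N → ℕ × ℕ) : Prop :=
  ∀ i j : Fin N, i ≤ j →
    (a j).1 < (a i).1 ∨ ((a i).1 = (a j).1 ∧ (a j).2 ≤ (a i).2)

/-- `a` is non-increasing in the negative lexicographical order (second
coordinate first, ties broken by the first coordinate). -/
def NegOrdered {N : ℕ} (a : Fin N → ℕ × ℕ) : Prop :=
  ∀ i j : Fin N, i ≤ j →
    (a j).2 < (a i).2 ∨ ((a i).2 = (a j).2 ∧ (a j).1 ≤ (a i).1)

/-- `b` is a rearrangement (permutation) of the sequence `a`. -/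
def IsRearrangement {N : ℕ} (a b : Fin N → ℕ × ℕ) : Prop :=
  ∃ σ : Equiv.Perm (Fin N), ∀ i, b i = a (σ i)


section AuxStatement14
open Finset

/-- reverse digraph -/
def SDigraph.rev {V : Type} (G : SDigraph V) : SDigraph V where
  Adj x y := G.Adj y x
  irrefl v := G.irrefl v

lemma rev_outDeg {V : Type} [Fintype V] [DecidableEq V] (G : SDigraph V) (v : V) :
    G.rev.outDeg v = G.inDeg v := rfl

lemma rev_inDeg {V : Type} [Fintype V] [DecidableEq V] (G : SDigraph V) (v : V) :
    G.rev.inDeg v = G.outDeg v := rfl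

lemma rev_realizes {V : Type} [Fintype V] [DecidableEq V] {G : SDigraph V} {d : V → ℕ × ℕ}
    (h : Realizes G d) : Realizes G.rev (fun v => ((d v).2, (d v).1)) := by
  intro v; exact ⟨(h v).2, (h v).1⟩

lemma inducesC3_rev {V : Type} {G : SDigraph V} {u v w : V} :
    InducesC3 G.rev u v w ↔ InducesC3 G u v w := by
  unfold InducesC3 SDigraph.rev
  tauto

lemma c3_pairs {V : Type} {H : SDigraph V} {u v w : V} (h : InducesC3 H u v w) :
    (H.Adj u v ≠ H.Adj v u) ∧ (H.Adj v w ≠ H.Adj w v) ∧ (H.Adj u w ≠ H.Adj w u) := by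
  rcases h with ⟨h1,h2,h3,h4,h5,h6⟩|⟨h1,h2,h3,h4,h5,h6⟩ <;> simp_all


def switched {N : ℕ} (G : SDigraph (Fin N)) (v1 v2 v3 v4 : Fin N)
    (h12 : v1 ≠ v2) (h14 : v1 ≠ v4) (h23 : v2 ≠ v3) (h34 : v3 ≠ v4) : SDigraph (Fin N) where
  Adj x y :=
    if (x = v1 ∧ y = v2) ∨ (x = v3 ∧ y = v4) then false
    else if (x = v1 ∧ y = v4) ∨ (x = v3 ∧ y = v2) then true
    else G.Adj x y
  irrefl x := by
    rw [if_neg, if_neg]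
    · exact G.irrefl x
    · rintro (⟨rfl, rfl⟩ | ⟨rfl, rfl⟩); exacts [h14 rfl, h23 rfl.symm]
    · rintro (⟨rfl, rfl⟩ | ⟨rfl, rfl⟩); exacts [h12 rfl, h34 rfl]

lemma switched_adj {N : ℕ} (G : SDigraph (Fin N)) (v1 v2 v3 v4 : Fin N)
    (h12 : v1 ≠ v2) (h14 : v1 ≠ v4) (h23 : v2 ≠ v3) (h34 : v3 ≠ v4) (x y : Fin N) :
    (switched G v1 v2 v3 v4 h12 h14 h23 h34).Adj x y =
      (if (x = v1 ∧ y = v2) ∨ (x = v3 ∧ y = v4) then false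
      else if (x = v1 ∧ y = v4) ∨ (x = v3 ∧ y = v2) then true
      else G.Adj x y) := rfl

lemma switched_realizes {N : ℕ} {G : SDigraph (Fin N)} {d : Fin N → ℕ × ℕ} (hG : Realizes G d)
    {v1 v2 v3 v4 : Fin N}
    (h12 : v1 ≠ v2) (h13 : v1 ≠ v3) (h14 : v1 ≠ v4) (h23 : v2 ≠ v3) (h24 : v2 ≠ v4)
    (h34 : v3 ≠ v4)
    (a12 : G.Adj v1 v2 = true) (a34 : G.Adj v3 v4 = true)
    (a14 : G.Adj v1 v4 = false) (a32 : G.Adj v3 v2 = false) :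
    Realizes (switched G v1 v2 v3 v4 h12 h14 h23 h34) d := by
  set H := switched G v1 v2 v3 v4 h12 h14 h23 h34 with hH
  have hspec : ∀ x y, H.Adj x y =
      (if (x = v1 ∧ y = v2) ∨ (x = v3 ∧ y = v4) then false
      else if (x = v1 ∧ y = v4) ∨ (x = v3 ∧ y = v2) then true
      else G.Adj x y) := fun x y => rfl
  intro v
  have hout : H.outDeg v = G.outDeg v := by
    by_cases hv1 : v = v1
    · have hset : (Finset.univ.filter fun y => H.Adj v y = true)
          = insert v4 ((Finset.univ.filter fun y => G.Adj v y = true).erase v2) := by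
        ext y
        simp only [mem_filter, mem_univ, true_and, mem_insert, mem_erase, hspec, hv1]
        by_cases hy2 : y = v2
        · subst hy2
          simp [h12, h13, h14, h23, h24, h34, Ne.symm h12, Ne.symm h13, Ne.symm h14, Ne.symm h23, Ne.symm h24, Ne.symm h34, a12, a34, a14, a32]
        · by_cases hy4 : y = v4
          · subst hy4; simp [h12, h13, h14, h23, h24, h34, Ne.symm h12, Ne.symm h13, Ne.symm h14, Ne.symm h23, Ne.symm h24, Ne.symm h34, a12, a34, a14, a32]
          · simp [hy2, hy4, h12, h13, h14, h23, h24, h34, Ne.symm h12, Ne.symm h13, Ne.symm h14, Ne.symm h23, Ne.symm h24, Ne.symm h34, a12, a34, a14, a32]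
      rw [SDigraph.outDeg, hset]
      have hv4ne : v4 ∉ (Finset.univ.filter fun y => G.Adj v y = true).erase v2 := by
        simp [hv1, h12, h13, h14, h23, h24, h34, Ne.symm h12, Ne.symm h13, Ne.symm h14, Ne.symm h23, Ne.symm h24, Ne.symm h34, a12, a34, a14, a32]
      have hv2mem : v2 ∈ (Finset.univ.filter fun y => G.Adj v y = true) := by simp [hv1, h12, h13, h14, h23, h24, h34, Ne.symm h12, Ne.symm h13, Ne.symm h14, Ne.symm h23, Ne.symm h24, Ne.symm h34, a12, a34, a14, a32]
      rw [card_insert_of_notMem hv4ne, card_erase_of_mem hv2mem]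
      have : 1 ≤ (Finset.univ.filter fun y => G.Adj v y = true).card := card_pos.2 ⟨v2, hv2mem⟩
      unfold SDigraph.outDeg
      omega
    · by_cases hv3 : v = v3
      · have hset : (Finset.univ.filter fun y => H.Adj v y = true)
            = insert v2 ((Finset.univ.filter fun y => G.Adj v y = true).erase v4) := by
          ext y
          simp only [mem_filter, mem_univ, true_and, mem_insert, mem_erase, hspec, hv3]
          by_cases hy4 : y = v4
          · subst hy4; simp [hv3, h12, h13, h14, h23, h24, h34, Ne.symm h12, Ne.symm h13, Ne.symm h14, Ne.symm h23, Ne.symm h24, Ne.symm h34, a12, a34, a14, a32]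
          · by_cases hy2 : y = v2
            · subst hy2; simp [h12, h13, h14, h23, h24, h34, Ne.symm h12, Ne.symm h13, Ne.symm h14, Ne.symm h23, Ne.symm h24, Ne.symm h34, a12, a34, a14, a32]
            · simp [hy2, hy4, h12, h13, h14, h23, h24, h34, Ne.symm h12, Ne.symm h13, Ne.symm h14, Ne.symm h23, Ne.symm h24, Ne.symm h34, a12, a34, a14, a32]
        rw [SDigraph.outDeg, hset]
        have hv2ne : v2 ∉ (Finset.univ.filter fun y => G.Adj v y = true).erase v4 := by
          simp [hv3, h12, h13, h14, h23, h24, h34, Ne.symm h12, Ne.symm h13, Ne.symm h14, Ne.symm h23, Ne.symm h24, Ne.symm h34, a12, a34, a14, a32]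
        have hv4mem : v4 ∈ (Finset.univ.filter fun y => G.Adj v y = true) := by simp [hv3, h12, h13, h14, h23, h24, h34, Ne.symm h12, Ne.symm h13, Ne.symm h14, Ne.symm h23, Ne.symm h24, Ne.symm h34, a12, a34, a14, a32]
        rw [card_insert_of_notMem hv2ne, card_erase_of_mem hv4mem]
        have : 1 ≤ (Finset.univ.filter fun y => G.Adj v y = true).card := card_pos.2 ⟨v4, hv4mem⟩
        unfold SDigraph.outDeg
        omega
      · unfold SDigraph.outDeg
        congr 1
        apply filter_congr
        intro y _
        simp [hspec, hv1, hv3, h12, h13, h14, h23, h24, h34, Ne.symm h12, Ne.symm h13, Ne.symm h14, Ne.symm h23, Ne.symm h24, Ne.symm h34, a12, a34, a14, a32]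
  have hin : H.inDeg v = G.inDeg v := by
    by_cases hv2 : v = v2
    · have hset : (Finset.univ.filter fun x => H.Adj x v = true)
          = insert v3 ((Finset.univ.filter fun x => G.Adj x v = true).erase v1) := by
        ext x
        simp only [mem_filter, mem_univ, true_and, mem_insert, mem_erase, hspec, hv2]
        by_cases hx1 : x = v1
        · subst hx1; simp [h12, h13, h14, h23, h24, h34, Ne.symm h12, Ne.symm h13, Ne.symm h14, Ne.symm h23, Ne.symm h24, Ne.symm h34, a12, a34, a14, a32]
        · by_cases hx3 : x = v3
          · subst hx3; simp [h12, h13, h14, h23, h24, h34, Ne.symm h12, Ne.symm h13, Ne.symm h14, Ne.symm h23, Ne.symm h24, Ne.symm h34, a12, a34, a14, a32]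
          · simp [hx1, hx3, h12, h13, h14, h23, h24, h34, Ne.symm h12, Ne.symm h13, Ne.symm h14, Ne.symm h23, Ne.symm h24, Ne.symm h34, a12, a34, a14, a32]
      rw [SDigraph.inDeg, hset]
      have hv3ne : v3 ∉ (Finset.univ.filter fun x => G.Adj x v = true).erase v1 := by
        simp [hv2, h12, h13, h14, h23, h24, h34, Ne.symm h12, Ne.symm h13, Ne.symm h14, Ne.symm h23, Ne.symm h24, Ne.symm h34, a12, a34, a14, a32]
      have hv1mem : v1 ∈ (Finset.univ.filter fun x => G.Adj x v = true) := by simp [hv2, h12, h13, h14, h23, h24, h34, Ne.symm h12, Ne.symm h13, Ne.symm h14, Ne.symm h23, Ne.symm h24, Ne.symm h34, a12, a34, a14, a32]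
      rw [card_insert_of_notMem hv3ne, card_erase_of_mem hv1mem]
      have : 1 ≤ (Finset.univ.filter fun x => G.Adj x v = true).card := card_pos.2 ⟨v1, hv1mem⟩
      unfold SDigraph.inDeg
      omega
    · by_cases hv4 : v = v4
      · have hset : (Finset.univ.filter fun x => H.Adj x v = true)
            = insert v1 ((Finset.univ.filter fun x => G.Adj x v = true).erase v3) := by
          ext x
          simp only [mem_filter, mem_univ, true_and, mem_insert, mem_erase, hspec, hv4]
          by_cases hx3 : x = v3
          · subst hx3; simp [h12, h13, h14, h23, h24, h34, Ne.symm h12, Ne.symm h13, Ne.symm h14, Ne.symm h23, Ne.symm h24, Ne.symm h34, a12, a34, a14, a32]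
          · by_cases hx1 : x = v1
            · subst hx1; simp [h12, h13, h14, h23, h24, h34, Ne.symm h12, Ne.symm h13, Ne.symm h14, Ne.symm h23, Ne.symm h24, Ne.symm h34, a12, a34, a14, a32]
            · simp [hx1, hx3, h12, h13, h14, h23, h24, h34, Ne.symm h12, Ne.symm h13, Ne.symm h14, Ne.symm h23, Ne.symm h24, Ne.symm h34, a12, a34, a14, a32]
        rw [SDigraph.inDeg, hset]
        have hv1ne : v1 ∉ (Finset.univ.filter fun x => G.Adj x v = true).erase v3 := by
          simp [hv4, h12, h13, h14, h23, h24, h34, Ne.symm h12, Ne.symm h13, Ne.symm h14, Ne.symm h23, Ne.symm h24, Ne.symm h34, a12, a34, a14, a32]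
        have hv3mem : v3 ∈ (Finset.univ.filter fun x => G.Adj x v = true) := by simp [hv4, h12, h13, h14, h23, h24, h34, Ne.symm h12, Ne.symm h13, Ne.symm h14, Ne.symm h23, Ne.symm h24, Ne.symm h34, a12, a34, a14, a32]
        rw [card_insert_of_notMem hv1ne, card_erase_of_mem hv3mem]
        have : 1 ≤ (Finset.univ.filter fun x => G.Adj x v = true).card := card_pos.2 ⟨v3, hv3mem⟩
        unfold SDigraph.inDeg
        omega
      · unfold SDigraph.inDeg
        congr 1
        apply filter_congr
        intro x _
        simp [hspec, hv2, hv4, h12, h13, h14, h23, h24, h34, Ne.symm h12, Ne.symm h13, Ne.symm h14, Ne.symm h23, Ne.symm h24, Ne.symm h34, a12, a34, a14, a32]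
  rw [hout, hin]; exact hG v

lemma sum_cconj {N : ℕ} (a : Fin N → ℕ) (m : ℕ) :
    ∑ t ∈ Finset.range m, cconj a (t + 1)
      = ∑ j : Fin N, (if (j : ℕ) < m then min (a j) (m - 1) else min (a j) m) := by
  unfold cconj
  have h1 : ∀ j : Fin N,
      ((Finset.range m).filter fun t => (j : ℕ) + 1 < t + 1 ∧ t + 1 - 1 ≤ a j)
        = Finset.Ioc (j : ℕ) (min (a j) (m - 1)) := by
    intro j; ext t
    simp only [mem_filter, Finset.mem_range, Finset.mem_Ioc]
    omega
  have h2 : ∀ j : Fin N,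
      ((Finset.range m).filter fun t => t + 1 < (j : ℕ) + 1 ∧ t + 1 ≤ a j)
        = Finset.range (min (j : ℕ) (min (a j) m)) := by
    intro j; ext t
    simp only [mem_filter, Finset.mem_range]
    omega
  calc ∑ t ∈ Finset.range m,
        ((Finset.univ.filter fun i : Fin N => (i : ℕ) + 1 < t + 1 ∧ t + 1 - 1 ≤ a i).card +
         (Finset.univ.filter fun i : Fin N => t + 1 < (i : ℕ) + 1 ∧ t + 1 ≤ a i).card)
      = ∑ t ∈ Finset.range m, ∑ j : Fin N,
          ((if (j : ℕ) + 1 < t + 1 ∧ t + 1 - 1 ≤ a j then 1 else 0) +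
           (if t + 1 < (j : ℕ) + 1 ∧ t + 1 ≤ a j then 1 else 0)) := by
        refine Finset.sum_congr rfl fun t _ => ?_
        rw [Finset.card_filter, Finset.card_filter, ← Finset.sum_add_distrib]
    _ = ∑ j : Fin N, ∑ t ∈ Finset.range m,
          ((if (j : ℕ) + 1 < t + 1 ∧ t + 1 - 1 ≤ a j then 1 else 0) +
           (if t + 1 < (j : ℕ) + 1 ∧ t + 1 ≤ a j then 1 else 0)) := Finset.sum_comm
    _ = ∑ j : Fin N, (if (j : ℕ) < m then min (a j) (m - 1) else min (a j) m) := by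
        refine Finset.sum_congr rfl fun j _ => ?_
        rw [Finset.sum_add_distrib, ← Finset.card_filter, ← Finset.card_filter, h1 j, h2 j,
          Nat.card_Ioc, Finset.card_range]
        split_ifs <;> omega

lemma sum_outDeg {N : ℕ} (G : SDigraph (Fin N)) (T : Finset (Fin N)) :
    ∑ v ∈ T, G.outDeg v = ∑ y : Fin N, (T.filter fun x => G.Adj x y = true).card := by
  unfold SDigraph.outDeg
  simp_rw [Finset.card_filter]
  exact Finset.sum_comm

lemma card_filter_val_lt {N : ℕ} (p : ℕ) (hp : p ≤ N) :
    (Finset.univ.filter fun i : Fin N => (i : ℕ) < p).card = p := by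
  rw [← Finset.card_range p]
  apply Finset.card_bij (fun (i : Fin N) _ => (i : ℕ))
  · intro i hi; simp only [mem_filter] at hi; simpa using hi.2
  · intro i hi j hj h; exact Fin.ext h
  · intro x hx
    simp only [Finset.mem_range] at hx
    exact ⟨⟨x, lt_of_lt_of_le hx hp⟩, by simp [hx], rfl⟩

lemma filter_card_iff {N : ℕ} {α : Type} [LinearOrder α] {g : Fin N → α} {Q : α → Prop}
    [DecidablePred Q] (hmono : ∀ i j : Fin N, i ≤ j → Q (g j) → Q (g i)) {p : ℕ}
    (h : (Finset.univ.filter fun j => Q (g j)).card = p) :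
    ∀ j : Fin N, Q (g j) ↔ (j : ℕ) < p := by
  intro j
  constructor
  · intro hQ
    by_contra hlt
    push_neg at hlt
    have hsub : (Finset.univ.filter fun i : Fin N => (i : ℕ) ≤ (j : ℕ))
        ⊆ Finset.univ.filter fun i => Q (g i) := by
      intro i hi
      simp only [mem_filter, mem_univ, true_and] at hi ⊢
      exact hmono i j (by exact Fin.le_def.2 hi) hQ
    have hcard := Finset.card_le_card hsub
    have : (Finset.univ.filter fun i : Fin N => (i : ℕ) ≤ (j : ℕ)).card = (j : ℕ) + 1 := by
      have : (Finset.univ.filter fun i : Fin N => (i : ℕ) ≤ (j : ℕ))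
          = Finset.univ.filter fun i : Fin N => (i : ℕ) < (j : ℕ) + 1 := by
        apply Finset.filter_congr; intro i _; simp
      rw [this, card_filter_val_lt ((j : ℕ) + 1) (by omega)]
    omega
  · intro hlt
    by_contra hQ
    have hsub : (Finset.univ.filter fun i : Fin N => Q (g i))
        ⊆ Finset.univ.filter fun i : Fin N => (i : ℕ) < (j : ℕ) := by
      intro i hi
      simp only [mem_filter, mem_univ, true_and] at hi ⊢
      by_contra hij
      push_neg at hij
      exact hQ (hmono j i (Fin.le_def.2 hij) hi)
    have hcard := Finset.card_le_card hsub
    rw [card_filter_val_lt ((j : ℕ)) (by omega), h] at hcard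
    omega

lemma slackBar_eq {N : ℕ} (d : Fin N → ℕ × ℕ) (G : SDigraph (Fin N)) (hG : Realizes G d)
    (σ : Equiv.Perm (Fin N)) (m : ℕ) :
    slackBar (fun j => d (σ j)) m
      = ∑ v : Fin N,
          (((if ((σ.symm v : Fin N) : ℕ) < m then min (G.inDeg v) (m - 1)
              else min (G.inDeg v) m : ℕ) : ℤ)
            - (((Finset.univ.filter fun x : Fin N => ((σ.symm x : Fin N) : ℕ) < m).filter
                 fun x => G.Adj x v = true).card : ℤ)) := by
  have hdeg1 : ∀ v, (d v).1 = G.outDeg v := fun v => ((hG v).1).symm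
  have hdeg2 : ∀ v, (d v).2 = G.inDeg v := fun v => ((hG v).2).symm
  unfold slackBar
  have e1 : (∑ i ∈ Finset.range m, (cconj (fun j => (d (σ j)).2) (i + 1) : ℤ))
      = ((∑ v : Fin N, (if ((σ.symm v : Fin N) : ℕ) < m then min (G.inDeg v) (m - 1)
          else min (G.inDeg v) m) : ℕ) : ℤ) := by
    rw [← Nat.cast_sum]
    congr 1
    rw [sum_cconj]
    rw [← Equiv.sum_comp σ (fun v => if ((σ.symm v : Fin N) : ℕ) < m
        then min (G.inDeg v) (m - 1) else min (G.inDeg v) m)]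
    refine Finset.sum_congr rfl fun j _ => ?_
    rw [Equiv.symm_apply_apply, hdeg2]
  have e2 : (∑ j ∈ Finset.univ.filter (fun j : Fin N => (j : ℕ) < m), ((d (σ j)).1 : ℤ))
      = ((∑ v ∈ Finset.univ.filter (fun v : Fin N => ((σ.symm v : Fin N) : ℕ) < m),
          G.outDeg v : ℕ) : ℤ) := by
    rw [← Nat.cast_sum]
    congr 1
    apply Finset.sum_bij (fun j _ => σ j)
    · intro j hj; simp only [mem_filter, mem_univ, true_and] at hj ⊢
      rw [Equiv.symm_apply_apply]; exact hj
    · intro i _ j _ h; exact σ.injective h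
    · intro v hv; simp only [mem_filter, mem_univ, true_and] at hv
      exact ⟨σ.symm v, by simp [hv], by simp⟩
    · intro j _; rw [hdeg1]
  rw [e1, e2, sum_outDeg G]
  push_cast
  rw [← Finset.sum_sub_distrib]

set_option maxHeartbeats 2000000 in
lemma bar_core {N : ℕ} (d : Fin N → ℕ × ℕ) (G : SDigraph (Fin N)) (hG : Realizes G d)
    (a b c : Fin N) (hab : a ≠ b) (hbc : b ≠ c) (hac : a ≠ c)
    (han : ∀ H : SDigraph (Fin N), Realizes H d → InducesC3 H a b c)
    (e1 : G.Adj a b = true) (e2 : G.Adj b c = true) (e3 : G.Adj c a = true)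
    (f1 : G.Adj b a = false) (f2 : G.Adj c b = false) (f3 : G.Adj a c = false) :
    ∃ k l : ℕ, d a = (k, l) ∧ d b = (k, l) ∧ d c = (k, l) ∧ 1 ≤ k ∧ 1 ≤ l ∧ l + 2 ≤ N ∧
      ∃ dbar : Fin N → ℕ × ℕ, IsRearrangement d dbar ∧ PosOrdered dbar ∧
        (∀ j : Fin N, l - 1 ≤ (j : ℕ) → (j : ℕ) < l + 2 → dbar j = (k, l)) ∧
        slackBar dbar (l - 1) = 0 ∧ slackBar dbar l = 1 ∧
        slackBar dbar (l + 1) = 1 ∧ slackBar dbar (l + 2) = 0 := by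
  -- Forcing fact F1a : a→x → b→x  (for x outside)
  have F1a : ∀ x, x ≠ a → x ≠ b → x ≠ c → G.Adj a x = true → G.Adj b x = true := by
    intro x hxa hxb hxc hax
    by_contra hbx
    rw [Bool.not_eq_true] at hbx
    -- switch (a,x,b,c): kills b→c
    have hreal := switched_realizes hG (Ne.symm hxa) hab hac hxb hxc
      hbc hax e2 f3 hbx
    set H := switched G a x b c (Ne.symm hxa) hac hxb hbc with hH
    have hc3 := han H hreal
    have h1 : H.Adj b c = false := by rw [switched_adj]; simp
    have h2 : H.Adj c b = false := by
      rw [switched_adj]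
      simp [Ne.symm hac, Ne.symm hbc, hxb, hxc, Ne.symm hxc, f2, hbc]
    exact (c3_pairs hc3).2.1 (h1.trans h2.symm)
  have F1b : ∀ x, x ≠ a → x ≠ b → x ≠ c → G.Adj b x = true → G.Adj c x = true := by
    intro x hxa hxb hxc hbx
    by_contra hcx
    rw [Bool.not_eq_true] at hcx
    -- switch (b,x,c,a): kills c→a
    have hreal := switched_realizes hG (Ne.symm hxb) hbc (Ne.symm hab) hxc
      hxa (Ne.symm hac) hbx e3 f1 hcx
    set H := switched G b x c a (Ne.symm hxb) (Ne.symm hab) hxc (Ne.symm hac) with hH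
    have hc3 := han H hreal
    have h1 : H.Adj c a = false := by rw [switched_adj]; simp
    have h2 : H.Adj a c = false := by
      rw [switched_adj]
      simp [hab, hac, hxa, Ne.symm hxa, Ne.symm hbc, f3]
    exact (c3_pairs hc3).2.2 (h2.trans h1.symm)
  have F1c : ∀ x, x ≠ a → x ≠ b → x ≠ c → G.Adj c x = true → G.Adj a x = true := by
    intro x hxa hxb hxc hcx
    by_contra hax
    rw [Bool.not_eq_true] at hax
    -- switch (c,x,a,b): kills a→b
    have hreal := switched_realizes hG (Ne.symm hxc) (Ne.symm hac) (Ne.symm hbc)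
      hxa hxb hab hcx e1 f2 hax
    set H := switched G c x a b (Ne.symm hxc) (Ne.symm hbc) hxa hab with hH
    have hc3 := han H hreal
    have h1 : H.Adj a b = false := by rw [switched_adj]; simp
    have h2 : H.Adj b a = false := by
      rw [switched_adj]
      simp [Ne.symm hab, hxb, hbc, hxa, Ne.symm hxa, hac, f1]
    exact (c3_pairs hc3).1 (h1.trans h2.symm)
  -- F2a : x→a → x→c
  have F2a : ∀ x, x ≠ a → x ≠ b → x ≠ c → G.Adj x a = true → G.Adj x c = true := by
    intro x hxa hxb hxc hxa'
    by_contra hxc'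
    rw [Bool.not_eq_true] at hxc'
    -- switch (b,c,x,a): kills b→c
    have hreal := switched_realizes hG hbc (Ne.symm hxb) (Ne.symm hab) (Ne.symm hxc)
      (Ne.symm hac) hxa e2 hxa' f1 hxc'
    set H := switched G b c x a hbc (Ne.symm hab) (Ne.symm hxc) hxa with hH
    have hc3 := han H hreal
    have h1 : H.Adj b c = false := by rw [switched_adj]; simp
    have h2 : H.Adj c b = false := by
      rw [switched_adj]
      simp [Ne.symm hbc, hxc, Ne.symm hxc, Ne.symm hab, f2]
    exact (c3_pairs hc3).2.1 (h1.trans h2.symm)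
  -- F2b : x→c → x→b
  have F2b : ∀ x, x ≠ a → x ≠ b → x ≠ c → G.Adj x c = true → G.Adj x b = true := by
    intro x hxa hxb hxc hxc'
    by_contra hxb'
    rw [Bool.not_eq_true] at hxb'
    -- switch (a,b,x,c): kills a→b
    have hreal := switched_realizes hG hab (Ne.symm hxa) hac (Ne.symm hxb)
      hbc hxc e1 hxc' f3 hxb'
    set H := switched G a b x c hab hac (Ne.symm hxb) hxc with hH
    have hc3 := han H hreal
    have h1 : H.Adj a b = false := by rw [switched_adj]; simp
    have h2 : H.Adj b a = false := by
      rw [switched_adj]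
      simp [Ne.symm hab, hxb, Ne.symm hxb, hxa, f1]
    exact (c3_pairs hc3).1 (h1.trans h2.symm)
  -- F2c : x→b → x→a
  have F2c : ∀ x, x ≠ a → x ≠ b → x ≠ c → G.Adj x b = true → G.Adj x a = true := by
    intro x hxa hxb hxc hxb'
    by_contra hxa'
    rw [Bool.not_eq_true] at hxa'
    -- switch (c,a,x,b): kills c→a
    have hreal := switched_realizes hG (Ne.symm hac) (Ne.symm hxc) (Ne.symm hbc)
      (Ne.symm hxa) hab hxb e3 hxb' f2 hxa'
    set H := switched G c a x b (Ne.symm hac) (Ne.symm hbc) (Ne.symm hxa) hxb with hH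
    have hc3 := han H hreal
    have h1 : H.Adj c a = false := by rw [switched_adj]; simp
    have h2 : H.Adj a c = false := by
      rw [switched_adj]
      simp [hac, Ne.symm hac, hxa, Ne.symm hxa, hab, f3]
    exact (c3_pairs hc3).2.2 (h2.trans h1.symm)
  -- F3 : x→y (both outside, distinct) → x→a ∨ a→y
  have F3 : ∀ x y, x ≠ a → x ≠ b → x ≠ c → y ≠ a → y ≠ b → y ≠ c → x ≠ y →
      G.Adj x y = true → G.Adj x a = true ∨ G.Adj a y = true := by
    intro x y hxa hxb hxc hya hyb hyc hxy hxyadj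
    by_contra hcon
    push_neg at hcon
    obtain ⟨hxa', hay'⟩ := hcon
    simp only [Bool.not_eq_true] at hxa' hay'
    have hxb' : G.Adj x b = false := by
      rw [Bool.eq_false_iff]
      intro h
      rw [F2c x hxa hxb hxc h] at hxa'
      exact absurd hxa' (by simp)
    -- switch (a,b,x,y): kills a→b
    have hreal := switched_realizes hG hab (Ne.symm hxa) (Ne.symm hya) (Ne.symm hxb)
      (Ne.symm hyb) hxy e1 hxyadj hay' hxb'
    set H := switched G a b x y hab (Ne.symm hya) (Ne.symm hxb) hxy with hH
    have hc3 := han H hreal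
    have h1 : H.Adj a b = false := by rw [switched_adj]; simp
    have h2 : H.Adj b a = false := by
      rw [switched_adj]
      simp [Ne.symm hab, hxb, Ne.symm hxb, hxa, Ne.symm hya, hyb, Ne.symm hyb, f1]
    exact (c3_pairs hc3).1 (h1.trans h2.symm)
  -- F4 : x→a and a→y (outside, distinct) → x→y
  have F4 : ∀ x y, x ≠ a → x ≠ b → x ≠ c → y ≠ a → y ≠ b → y ≠ c → x ≠ y →
      G.Adj x a = true → G.Adj a y = true → G.Adj x y = true := by
    intro x y hxa hxb hxc hya hyb hyc hxy hxa' hay'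
    by_contra hxy'
    rw [Bool.not_eq_true] at hxy'
    have hby : G.Adj b y = true := F1a y hya hyb hyc hay'
    -- switch (b,y,x,a): creates b→a while keeping a→b
    have hreal := switched_realizes hG (Ne.symm hyb) (Ne.symm hxb) (Ne.symm hab)
      (Ne.symm hxy) hya hxa hby hxa' f1 hxy'
    set H := switched G b y x a (Ne.symm hyb) (Ne.symm hab) (Ne.symm hxy) hxa with hH
    have hc3 := han H hreal
    have h1 : H.Adj b a = true := by
      rw [switched_adj]
      simp [Ne.symm hab, hya, Ne.symm hya, Ne.symm hxb]
    have h2 : H.Adj a b = true := by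
      rw [switched_adj]
      simp [hab, Ne.symm hab, hxa, Ne.symm hxa, hyb, Ne.symm hyb, e1]
    exact (c3_pairs hc3).1 (h2.trans h1.symm)
  
  classical
  -- the sets of "outside" in/out neighbours of the triple
  set OutF : Finset (Fin N) :=
    Finset.univ.filter (fun x => x ≠ a ∧ x ≠ b ∧ x ≠ c ∧ G.Adj a x = true) with hOutF
  set InF : Finset (Fin N) :=
    Finset.univ.filter (fun x => x ≠ a ∧ x ≠ b ∧ x ≠ c ∧ G.Adj x a = true) with hInF
  have mOut : ∀ x, x ∈ OutF ↔ (x ≠ a ∧ x ≠ b ∧ x ≠ c ∧ G.Adj a x = true) := by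
    intro x; rw [hOutF]; simp
  have mIn : ∀ x, x ∈ InF ↔ (x ≠ a ∧ x ≠ b ∧ x ≠ c ∧ G.Adj x a = true) := by
    intro x; rw [hInF]; simp
  have haOut : a ∉ OutF := fun h => ((mOut a).1 h).1 rfl
  have hbOut : b ∉ OutF := fun h => ((mOut b).1 h).2.1 rfl
  have hcOut : c ∉ OutF := fun h => ((mOut c).1 h).2.2.1 rfl
  have haIn : a ∉ InF := fun h => ((mIn a).1 h).1 rfl
  have hbIn : b ∉ InF := fun h => ((mIn b).1 h).2.1 rfl
  have hcIn : c ∉ InF := fun h => ((mIn c).1 h).2.2.1 rfl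
  set k := (d a).1 with hk
  set l := (d a).2 with hl
  have boolne : ∀ {s : Bool}, s = true → s = false → False := by
    rintro s rfl h; exact absurd h (by simp)
  have outA : (Finset.univ.filter fun y => G.Adj a y = true) = insert b OutF := by
    ext y
    simp only [mem_filter, mem_univ, true_and, mem_insert, mOut]
    constructor
    · intro h
      by_cases hyb : y = b
      · exact Or.inl hyb
      · refine Or.inr ⟨?_, hyb, ?_, h⟩
        · rintro rfl; exact boolne h (G.irrefl _)
        · rintro rfl; exact boolne h f3
    · rintro (rfl | ⟨-, -, -, h⟩); exacts [e1, h]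
  have inA : (Finset.univ.filter fun x => G.Adj x a = true) = insert c InF := by
    ext x
    simp only [mem_filter, mem_univ, true_and, mem_insert, mIn]
    constructor
    · intro h
      by_cases hxc : x = c
      · exact Or.inl hxc
      · refine Or.inr ⟨?_, ?_, hxc, h⟩
        · rintro rfl; exact boolne h (G.irrefl _)
        · rintro rfl; exact boolne h f1
    · rintro (rfl | ⟨-, -, -, h⟩); exacts [e3, h]
  have hkcard : OutF.card + 1 = k := by
    rw [hk, ← (hG a).1, SDigraph.outDeg, outA, card_insert_of_notMem hbOut]
  have hlcard : InF.card + 1 = l := by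
    rw [hl, ← (hG a).2, SDigraph.inDeg, inA, card_insert_of_notMem hcIn]
  have outB : (Finset.univ.filter fun y => G.Adj b y = true) = insert c OutF := by
    ext y
    simp only [mem_filter, mem_univ, true_and, mem_insert, mOut]
    constructor
    · intro h
      by_cases hyc : y = c
      · exact Or.inl hyc
      · have hya : y ≠ a := by rintro rfl; exact boolne h f1
        have hyb : y ≠ b := by rintro rfl; exact boolne h (G.irrefl _)
        exact Or.inr ⟨hya, hyb, hyc, F1c y hya hyb hyc (F1b y hya hyb hyc h)⟩
    · rintro (rfl | ⟨h1, h2, h3, h⟩); exacts [e2, F1a y h1 h2 h3 h]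
  have outC : (Finset.univ.filter fun y => G.Adj c y = true) = insert a OutF := by
    ext y
    simp only [mem_filter, mem_univ, true_and, mem_insert, mOut]
    constructor
    · intro h
      by_cases hya : y = a
      · exact Or.inl hya
      · have hyb : y ≠ b := by rintro rfl; exact boolne h f2
        have hyc : y ≠ c := by rintro rfl; exact boolne h (G.irrefl _)
        exact Or.inr ⟨hya, hyb, hyc, F1c y hya hyb hyc h⟩
    · rintro (rfl | ⟨h1, h2, h3, h⟩)
      exacts [e3, F1b y h1 h2 h3 (F1a y h1 h2 h3 h)]
  have inB : (Finset.univ.filter fun x => G.Adj x b = true) = insert a InF := by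
    ext x
    simp only [mem_filter, mem_univ, true_and, mem_insert, mIn]
    constructor
    · intro h
      by_cases hxa : x = a
      · exact Or.inl hxa
      · have hxb : x ≠ b := by rintro rfl; exact boolne h (G.irrefl _)
        have hxc : x ≠ c := by rintro rfl; exact boolne h f2
        exact Or.inr ⟨hxa, hxb, hxc, F2c x hxa hxb hxc h⟩
    · rintro (rfl | ⟨h1, h2, h3, h⟩)
      exacts [e1, F2b x h1 h2 h3 (F2a x h1 h2 h3 h)]
  have inC : (Finset.univ.filter fun x => G.Adj x c = true) = insert b InF := by
    ext x
    simp only [mem_filter, mem_univ, true_and, mem_insert, mIn]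
    constructor
    · intro h
      by_cases hxb : x = b
      · exact Or.inl hxb
      · have hxa : x ≠ a := by rintro rfl; exact boolne h f3
        have hxc : x ≠ c := by rintro rfl; exact boolne h (G.irrefl _)
        exact Or.inr ⟨hxa, hxb, hxc, F2c x hxa hxb hxc (F2b x hxa hxb hxc h)⟩
    · rintro (rfl | ⟨h1, h2, h3, h⟩); exacts [e2, F2a x h1 h2 h3 h]
  have hdb : d b = (k, l) := by
    have h1 : (d b).1 = k := by
      rw [← (hG b).1, SDigraph.outDeg, outB, card_insert_of_notMem hcOut, hkcard]
    have h2 : (d b).2 = l := by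
      rw [← (hG b).2, SDigraph.inDeg, inB, card_insert_of_notMem haIn, hlcard]
    rw [← h1, ← h2]
  have hdc : d c = (k, l) := by
    have h1 : (d c).1 = k := by
      rw [← (hG c).1, SDigraph.outDeg, outC, card_insert_of_notMem haOut, hkcard]
    have h2 : (d c).2 = l := by
      rw [← (hG c).2, SDigraph.inDeg, inC, card_insert_of_notMem hbIn, hlcard]
    rw [← h1, ← h2]
  have hda : d a = (k, l) := by rw [hk, hl]
  have hk1 : 1 ≤ k := by omega
  have hl1 : 1 ≤ l := by omega
  -- degree bounds
  have hInHigh : ∀ x ∈ InF, k + 1 ≤ (d x).1 := by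
    intro x hx
    obtain ⟨hxa, hxb, hxc, hxadj⟩ := (mIn x).1 hx
    have hsub : insert a (insert b (insert c (OutF.erase x)))
        ⊆ Finset.univ.filter fun y => G.Adj x y = true := by
      intro y hy
      simp only [mem_insert, mem_erase] at hy
      simp only [mem_filter, mem_univ, true_and]
      rcases hy with rfl | rfl | rfl | ⟨hyx, hy⟩
      · exact hxadj
      · exact F2b x hxa hxb hxc (F2a x hxa hxb hxc hxadj)
      · exact F2a x hxa hxb hxc hxadj
      · obtain ⟨hya, hyb, hyc, hay⟩ := (mOut y).1 hy
        exact F4 x y hxa hxb hxc hya hyb hyc (Ne.symm hyx) hxadj hay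
    have hcard := Finset.card_le_card hsub
    rw [card_insert_of_notMem, card_insert_of_notMem, card_insert_of_notMem] at hcard
    · rw [← (hG x).1, SDigraph.outDeg]
      have := Finset.pred_card_le_card_erase (s := OutF) (a := x)
      omega
    · simp only [mem_erase]; rintro ⟨-, h⟩; exact hcOut h
    · simp only [mem_insert, mem_erase]
      rintro (h | ⟨-, h⟩); exacts [hbc h, hbOut h]
    · simp only [mem_insert, mem_erase]
      rintro (h | h | ⟨-, h⟩); exacts [hab h, hac h, haOut h]
  have hNotInLow : ∀ x, x ≠ a → x ≠ b → x ≠ c → G.Adj x a = false → (d x).1 < k := by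
    intro x hxa hxb hxc hxadj
    have hsub : (Finset.univ.filter fun y => G.Adj x y = true) ⊆ OutF := by
      intro y hy
      simp only [mem_filter, mem_univ, true_and] at hy
      have hya : y ≠ a := by rintro rfl; exact boolne hy hxadj
      have hyb : y ≠ b := by
        rintro rfl; exact boolne (F2c x hxa hxb hxc hy) hxadj
      have hyc : y ≠ c := by
        rintro rfl
        exact boolne (F2c x hxa hxb hxc (F2b x hxa hxb hxc hy)) hxadj
      have hxy : x ≠ y := by rintro rfl; exact boolne hy (G.irrefl _)
      rcases F3 x y hxa hxb hxc hya hyb hyc hxy hy with h | h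
      · exact absurd h (by simp [hxadj])
      · exact (mOut y).2 ⟨hya, hyb, hyc, h⟩
    have hcard := Finset.card_le_card hsub
    rw [← (hG x).1, SDigraph.outDeg]
    omega
  have hOutHighIn : ∀ y ∈ OutF, 3 + (InF.erase y).card ≤ (d y).2 := by
    intro y hy
    obtain ⟨hya, hyb, hyc, hay⟩ := (mOut y).1 hy
    have hsub : insert a (insert b (insert c (InF.erase y)))
        ⊆ Finset.univ.filter fun x => G.Adj x y = true := by
      intro x hx
      simp only [mem_insert, mem_erase] at hx
      simp only [mem_filter, mem_univ, true_and]
      rcases hx with rfl | rfl | rfl | ⟨hxy, hx⟩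
      · exact hay
      · exact F1a y hya hyb hyc hay
      · exact F1b y hya hyb hyc (F1a y hya hyb hyc hay)
      · obtain ⟨hxa, hxb, hxc, hxadj⟩ := (mIn x).1 hx
        exact F4 x y hxa hxb hxc hya hyb hyc hxy hxadj hay
    have hcard := Finset.card_le_card hsub
    rw [card_insert_of_notMem, card_insert_of_notMem, card_insert_of_notMem] at hcard
    · rw [← (hG y).2, SDigraph.inDeg]; omega
    · simp only [mem_erase]; rintro ⟨-, h⟩; exact hcIn h
    · simp only [mem_insert, mem_erase]
      rintro (h | ⟨-, h⟩); exacts [hbc h, hbIn h]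
    · simp only [mem_insert, mem_erase]
      rintro (h | h | ⟨-, h⟩); exacts [hab h, hac h, haIn h]
  have hNotOutIn : ∀ y, y ≠ a → y ≠ b → y ≠ c → G.Adj a y = false →
      (Finset.univ.filter fun x => G.Adj x y = true)
        = InF.filter (fun x => G.Adj x y = true) := by
    intro y hya hyb hyc hay
    ext x
    simp only [mem_filter, mem_univ, true_and]
    constructor
    · intro h
      refine ⟨(mIn x).2 ⟨?_, ?_, ?_, ?_⟩, h⟩
      · rintro rfl; exact boolne h hay
      · rintro rfl
        exact boolne (F1c y hya hyb hyc (F1b y hya hyb hyc h)) hay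
      · rintro rfl; exact boolne (F1c y hya hyb hyc h) hay
      · have hxa : x ≠ a := by rintro rfl; exact boolne h hay
        have hxb : x ≠ b := by
          rintro rfl
          exact boolne (F1c y hya hyb hyc (F1b y hya hyb hyc h)) hay
        have hxc : x ≠ c := by
          rintro rfl; exact boolne (F1c y hya hyb hyc h) hay
        have hxy : x ≠ y := by rintro rfl; exact boolne h (G.irrefl _)
        rcases F3 x y hxa hxb hxc hya hyb hyc hxy h with h' | h'
        · exact h'
        · exact absurd h' (by simp [hay])
    · exact fun h => h.2
  
  -- sorting
  set key : Fin N → (Lex (ℕ × ℕ))ᵒᵈ := fun i => OrderDual.toDual (toLex (d i)) with hkeydef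
  obtain ⟨σ, hmono⟩ : ∃ σ : Equiv.Perm (Fin N), Monotone (key ∘ σ) :=
    ⟨Tuple.sort key, Tuple.monotone_sort key⟩
  set dbar : Fin N → ℕ × ℕ := fun j => d (σ j) with hdbar
  have hanti : ∀ i j : Fin N, i ≤ j → toLex (dbar j) ≤ toLex (dbar i) := by
    intro i j hij
    have h := hmono hij
    simp only [Function.comp_apply, hkeydef, OrderDual.toDual_le_toDual] at h
    exact h
  have hrearr : IsRearrangement d dbar := ⟨σ, fun i => rfl⟩
  have hPos : PosOrdered dbar := by
    intro i j hij
    have h := hanti i j hij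
    rw [Prod.Lex.le_iff] at h
    rcases h with h | ⟨h1, h2⟩
    · exact Or.inl h
    · exact Or.inr ⟨h1.symm, h2⟩
  -- classification of values
  have hclass_gt : ∀ x : Fin N, toLex (k, l) < toLex (d x) ↔ x ∈ InF := by
    intro x
    constructor
    · intro h
      rw [Prod.Lex.lt_iff] at h
      by_cases hxa : x = a
      · subst hxa; rw [hda] at h; simp at h
      · by_cases hxb : x = b
        · subst hxb; rw [hdb] at h; simp at h
        · by_cases hxc : x = c
          · subst hxc; rw [hdc] at h; simp at h
          · by_cases hxIn : x ∈ InF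
            · exact hxIn
            · have : G.Adj x a = false := by
                rw [Bool.eq_false_iff]
                intro hadj
                exact hxIn ((mIn x).2 ⟨hxa, hxb, hxc, hadj⟩)
              have := hNotInLow x hxa hxb hxc this
              simp at h; omega
    · intro hx
      rw [Prod.Lex.lt_iff]
      exact Or.inl (by have := hInHigh x hx; simp only [ofLex_toLex]; omega)
  have hclass_ge : ∀ x : Fin N,
      toLex (k, l) ≤ toLex (d x) ↔ (x ∈ InF ∨ x = a ∨ x = b ∨ x = c) := by
    intro x
    constructor
    · intro h
      rw [Prod.Lex.le_iff] at h
      by_cases hxa : x = a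
      · exact Or.inr (Or.inl hxa)
      · by_cases hxb : x = b
        · exact Or.inr (Or.inr (Or.inl hxb))
        · by_cases hxc : x = c
          · exact Or.inr (Or.inr (Or.inr hxc))
          · by_cases hxIn : x ∈ InF
            · exact Or.inl hxIn
            · exfalso
              have : G.Adj x a = false := by
                rw [Bool.eq_false_iff]
                intro hadj
                exact hxIn ((mIn x).2 ⟨hxa, hxb, hxc, hadj⟩)
              have := hNotInLow x hxa hxb hxc this
              simp at h; omega
    · rintro (hx | rfl | rfl | rfl)
      · exact le_of_lt ((hclass_gt x).2 hx)
      · rw [hda]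
      · rw [hdb]
      · rw [hdc]
  -- counting
  have hgeSet : (Finset.univ.filter fun x : Fin N => toLex (k, l) ≤ toLex (d x))
      = insert a (insert b (insert c InF)) := by
    ext x
    simp only [mem_filter, mem_univ, true_and, mem_insert, hclass_ge]
    tauto
  have hgtSet : (Finset.univ.filter fun x : Fin N => toLex (k, l) < toLex (d x)) = InF := by
    ext x
    simp only [mem_filter, mem_univ, true_and, hclass_gt]
  have hgeCard : (Finset.univ.filter fun x : Fin N => toLex (k, l) ≤ toLex (d x)).card
      = l + 2 := by
    rw [hgeSet, card_insert_of_notMem, card_insert_of_notMem, card_insert_of_notMem]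
    · omega
    · exact hcIn
    · simp only [mem_insert]; rintro (h | h); exacts [hbc h, hbIn h]
    · simp only [mem_insert]; rintro (h | h | h); exacts [hab h, hac h, haIn h]
  have hlN : l + 2 ≤ N := by
    have := Finset.card_le_univ (insert a (insert b (insert c InF)))
    rw [← hgeSet, hgeCard] at this
    · simpa using this
  -- transfer counts to positions
  have hbijcard : ∀ Q : (ℕ × ℕ) → Prop, ∀ _ : DecidablePred Q,
      (Finset.univ.filter fun j : Fin N => Q (dbar j)).card
        = (Finset.univ.filter fun x : Fin N => Q (d x)).card := by
    intro Q _
    apply Finset.card_bij (fun j _ => σ j)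
    · intro j hj
      simp only [mem_filter, mem_univ, true_and] at hj ⊢
      exact hj
    · intro i _ j _ h; exact σ.injective h
    · intro x hx
      simp only [mem_filter, mem_univ, true_and] at hx
      exact ⟨σ.symm x, by simp [hdbar, hx], by simp⟩
  have hcnt1 : (Finset.univ.filter fun j : Fin N => toLex (k, l) < toLex (dbar j)).card
      = l - 1 := by
    refine (hbijcard (fun p => toLex (k, l) < toLex p) inferInstance).trans ?_
    rw [hgtSet]; omega
  have hcnt2 : (Finset.univ.filter fun j : Fin N => toLex (k, l) ≤ toLex (dbar j)).card
      = l + 2 := by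
    refine (hbijcard (fun p => toLex (k, l) ≤ toLex p) inferInstance).trans hgeCard
  have hgt_iff : ∀ j : Fin N, toLex (k, l) < toLex (dbar j) ↔ (j : ℕ) < l - 1 :=
    filter_card_iff (g := fun j => toLex (dbar j)) (Q := fun v => toLex (k, l) < v)
      (fun i j hij hQ => lt_of_lt_of_le hQ (hanti i j hij)) hcnt1
  have hge_iff : ∀ j : Fin N, toLex (k, l) ≤ toLex (dbar j) ↔ (j : ℕ) < l + 2 :=
    filter_card_iff (g := fun j => toLex (dbar j)) (Q := fun v => toLex (k, l) ≤ v)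
      (fun i j hij hQ => le_trans hQ (hanti i j hij)) hcnt2
  have hmid : ∀ j : Fin N, l - 1 ≤ (j : ℕ) → (j : ℕ) < l + 2 → dbar j = (k, l) := by
    intro j h1 h2
    have hge : toLex (k, l) ≤ toLex (dbar j) := (hge_iff j).2 h2
    have hngt : ¬ toLex (k, l) < toLex (dbar j) := by
      rw [hgt_iff j]; omega
    have := le_antisymm hge (not_lt.1 hngt)
    have := toLex_inj.1 this.symm
    rw [this]
  
  have hdv : ∀ v : Fin N, dbar (σ.symm v) = d v := by
    intro v; rw [hdbar]; simp
  have hlN' : l - 1 < N := by omega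
  have hlN'' : l < N := by omega
  obtain ⟨t1, ht1def⟩ : ∃ t : Fin N, σ ⟨l - 1, hlN'⟩ = t := ⟨_, rfl⟩
  obtain ⟨t2, ht2def⟩ : ∃ t : Fin N, σ ⟨l, hlN''⟩ = t := ⟨_, rfl⟩
  have hdt1 : d t1 = (k, l) := by
    rw [← ht1def]
    exact hmid ⟨l - 1, hlN'⟩ (by simp) (by simp; omega)
  have hdt2 : d t2 = (k, l) := by
    rw [← ht2def]
    exact hmid ⟨l, hlN''⟩ (by simp) (by simp)
  have htriple : ∀ t : Fin N, d t = (k, l) → t = a ∨ t = b ∨ t = c := by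
    intro t hdt
    have hge : toLex (k, l) ≤ toLex (d t) := by rw [hdt]
    rcases (hclass_ge t).1 hge with h | h | h | h
    · exfalso
      have := hInHigh t h
      rw [hdt] at this
      simp at this
    · exact Or.inl h
    · exact Or.inr (Or.inl h)
    · exact Or.inr (Or.inr h)
  have ht1abc := htriple t1 hdt1
  have ht2abc := htriple t2 hdt2
  have ht12 : t1 ≠ t2 := by
    rw [← ht1def, ← ht2def]
    intro h
    have := σ.injective h
    rw [Fin.mk.injEq] at this
    omega
  have hnotInabc : ∀ t : Fin N, t = a ∨ t = b ∨ t = c → t ∉ InF := by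
    rintro t (rfl | rfl | rfl) <;> assumption
  -- T-set equalities
  have hsymmlt : ∀ (v : Fin N) (m : ℕ), (((σ.symm v : Fin N) : ℕ) < m ↔ ((σ.symm v : Fin N) : ℕ) < m) := fun _ _ => Iff.rfl
  have hTiff1 : ∀ v : Fin N, ((σ.symm v : Fin N) : ℕ) < l - 1 ↔ v ∈ InF := by
    intro v
    rw [← hgt_iff (σ.symm v), hdv v, hclass_gt]
  have hTiff4 : ∀ v : Fin N, ((σ.symm v : Fin N) : ℕ) < l + 2
      ↔ (v ∈ InF ∨ v = a ∨ v = b ∨ v = c) := by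
    intro v
    rw [← hge_iff (σ.symm v), hdv v, hclass_ge]
  have hvt : ∀ (v : Fin N) (j : Fin N), σ.symm v = j ↔ v = σ j := by
    intro v j; rw [Equiv.symm_apply_eq]
  have hTeq1 : (Finset.univ.filter fun v : Fin N => ((σ.symm v : Fin N) : ℕ) < l - 1)
      = InF ∪ (∅ : Finset (Fin N)) := by
    rw [Finset.union_empty]
    ext v
    simp only [mem_filter, mem_univ, true_and]
    exact hTiff1 v
  have hTeq2 : (Finset.univ.filter fun v : Fin N => ((σ.symm v : Fin N) : ℕ) < l)
      = InF ∪ {t1} := by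
    ext v
    simp only [mem_filter, mem_univ, true_and, mem_union, mem_singleton]
    constructor
    · intro h
      by_cases h' : ((σ.symm v : Fin N) : ℕ) < l - 1
      · exact Or.inl ((hTiff1 v).1 h')
      · refine Or.inr ?_
        have : σ.symm v = ⟨l - 1, hlN'⟩ := by
          apply Fin.ext; simp only []; omega
        rw [hvt] at this
        rw [this]; exact ht1def
    · rintro (h | rfl)
      · have := (hTiff1 v).2 h; omega
      · have : σ.symm v = ⟨l - 1, hlN'⟩ := by rw [hvt]; exact ht1def.symm
        rw [this]; simp; omega
  have hTeq3 : (Finset.univ.filter fun v : Fin N => ((σ.symm v : Fin N) : ℕ) < l + 1)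
      = InF ∪ {t1, t2} := by
    ext v
    simp only [mem_filter, mem_univ, true_and, mem_union, mem_insert, mem_singleton]
    constructor
    · intro h
      by_cases h' : ((σ.symm v : Fin N) : ℕ) < l - 1
      · exact Or.inl ((hTiff1 v).1 h')
      · refine Or.inr ?_
        by_cases h'' : ((σ.symm v : Fin N) : ℕ) = l - 1
        · left
          have : σ.symm v = ⟨l - 1, hlN'⟩ := by apply Fin.ext; simp only []; omega
          rw [hvt] at this; rw [this]; exact ht1def
        · right
          have : σ.symm v = ⟨l, hlN''⟩ := by apply Fin.ext; simp only []; omega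
          rw [hvt] at this; rw [this]; exact ht2def
    · rintro (h | rfl | rfl)
      · have := (hTiff1 v).2 h; omega
      · have : σ.symm v = ⟨l - 1, hlN'⟩ := by rw [hvt]; exact ht1def.symm
        rw [this]; simp
      · have : σ.symm v = ⟨l, hlN''⟩ := by rw [hvt]; exact ht2def.symm
        rw [this]; simp
  have hTeq4 : (Finset.univ.filter fun v : Fin N => ((σ.symm v : Fin N) : ℕ) < l + 2)
      = InF ∪ {a, b, c} := by
    ext v
    simp only [mem_filter, mem_univ, true_and, mem_union, mem_insert, mem_singleton]
    rw [hTiff4 v]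
  -- facts about arcs into a fixed triple vertex
  have hInFt : ∀ t : Fin N, t = a ∨ t = b ∨ t = c →
      (InF.filter fun x => G.Adj x t = true) = InF := by
    intro t ht
    apply Finset.filter_eq_self.2
    intro x hx
    obtain ⟨hxa, hxb, hxc, hxadj⟩ := (mIn x).1 hx
    rcases ht with rfl | rfl | rfl
    · exact hxadj
    · exact F2b x hxa hxb hxc (F2a x hxa hxb hxc hxadj)
    · exact F2a x hxa hxb hxc hxadj
  have hdisjIS : ∀ S : Finset (Fin N), S ⊆ ({a, b, c} : Finset (Fin N)) → Disjoint InF S := by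
    intro S hS
    rw [Finset.disjoint_right]
    intro x hxS hxI
    have := hS hxS
    simp only [mem_insert, mem_singleton] at this
    exact hnotInabc x this hxI
  -- master computation
  have hmain : ∀ (m : ℕ) (S : Finset (Fin N)), S ⊆ ({a, b, c} : Finset (Fin N)) →
      m = InF.card + S.card →
      ((Finset.univ.filter fun v : Fin N => ((σ.symm v : Fin N) : ℕ) < m) = InF ∪ S) →
      slackBar dbar m
        = ∑ v ∈ ({a, b, c} : Finset (Fin N)),
            (((if v ∈ S then min (G.inDeg v) (m - 1) else min (G.inDeg v) m : ℕ) : ℤ)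
              - (((InF ∪ S).filter fun x => G.Adj x v = true).card : ℤ)) := by
    intro m S hSsub hm hTeq
    have hScard : S.card ≤ 3 := by
      calc S.card ≤ ({a, b, c} : Finset (Fin N)).card := Finset.card_le_card hSsub
        _ ≤ 3 := by
          apply le_trans (Finset.card_insert_le _ _)
          have := Finset.card_insert_le b ({c} : Finset (Fin N))
          simp at this ⊢
          omega
    have hmem : ∀ v : Fin N, (((σ.symm v : Fin N) : ℕ) < m) ↔ v ∈ InF ∪ S := by
      intro v
      rw [← hTeq]
      simp
    rw [hdbar, slackBar_eq d G hG σ m]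
    have hstep : ∀ v : Fin N,
        (((if ((σ.symm v : Fin N) : ℕ) < m then min (G.inDeg v) (m - 1)
            else min (G.inDeg v) m : ℕ) : ℤ)
          - (((Finset.univ.filter fun x : Fin N => ((σ.symm x : Fin N) : ℕ) < m).filter
              fun x => G.Adj x v = true).card : ℤ))
        = (((if v ∈ InF ∪ S then min (G.inDeg v) (m - 1) else min (G.inDeg v) m : ℕ) : ℤ)
          - (((InF ∪ S).filter fun x => G.Adj x v = true).card : ℤ)) := by
      intro v
      rw [hTeq]
      congr 2
      exact if_congr (hmem v) rfl rfl
    refine Eq.trans (Finset.sum_congr rfl (fun v _ => hstep v)) ?_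
    have hzero : ∀ v : Fin N, v ∉ ({a, b, c} : Finset (Fin N)) →
        (((if v ∈ InF ∪ S then min (G.inDeg v) (m - 1) else min (G.inDeg v) m : ℕ) : ℤ)
          - (((InF ∪ S).filter fun x => G.Adj x v = true).card : ℤ)) = 0 := by
      intro v hv
      simp only [mem_insert, mem_singleton, not_or] at hv
      obtain ⟨hva, hvb, hvc⟩ := hv
      have hvS : v ∉ S := fun h => by
        have := hSsub h
        simp only [mem_insert, mem_singleton] at this
        tauto
      have hveq : v ∈ InF ∪ S ↔ v ∈ InF := by simp [Finset.mem_union, hvS]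
      have hcardU : ((InF ∪ S).filter fun x => G.Adj x v = true).card
          = (InF.filter fun x => G.Adj x v = true).card
            + (S.filter fun x => G.Adj x v = true).card := by
        rw [Finset.filter_union]
        exact Finset.card_union_of_disjoint
          (Finset.disjoint_filter_filter (hdisjIS S hSsub))
      have key : (if v ∈ InF ∪ S then min (G.inDeg v) (m - 1) else min (G.inDeg v) m)
          = ((InF ∪ S).filter fun x => G.Adj x v = true).card := by
        rw [hcardU]
        by_cases hvOut : v ∈ OutF
        · have hSf : (S.filter fun x => G.Adj x v = true) = S := by
            apply Finset.filter_eq_self.2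
            intro x hx
            have hx3 := hSsub hx
            simp only [mem_insert, mem_singleton] at hx3
            obtain ⟨-, -, -, hav⟩ := (mOut v).1 hvOut
            rcases hx3 with rfl | rfl | rfl
            · exact hav
            · exact F1a v hva hvb hvc hav
            · exact F1b v hva hvb hvc (F1a v hva hvb hvc hav)
          have hIf : (InF.filter fun x => G.Adj x v = true) = InF.erase v := by
            ext x
            simp only [mem_filter, mem_erase]
            constructor
            · rintro ⟨hxI, hxv⟩
              refine ⟨fun h => ?_, hxI⟩
              subst h
              exact boolne hxv (G.irrefl _)
            · rintro ⟨hxv, hxI⟩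
              obtain ⟨hxa, hxb, hxc, hxadj⟩ := (mIn x).1 hxI
              obtain ⟨-, -, -, hav⟩ := (mOut v).1 hvOut
              exact ⟨hxI, F4 x v hxa hxb hxc hva hvb hvc hxv hxadj hav⟩
          have hdeg := hOutHighIn v hvOut
          have hindeg : G.inDeg v = (d v).2 := (hG v).2
          rw [hSf, hIf]
          by_cases hvIn : v ∈ InF
          · rw [if_pos (by simp [hvIn])]
            have h1 : 1 ≤ InF.card := Finset.card_pos.2 ⟨v, hvIn⟩
            rw [Finset.card_erase_of_mem hvIn] at hdeg ⊢
            omega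
          · rw [if_neg (by simp [hvIn, hvS])]
            rw [Finset.erase_eq_of_notMem hvIn] at hdeg ⊢
            omega
        · have hav : G.Adj a v = false := by
            rw [Bool.eq_false_iff]
            intro h
            exact hvOut ((mOut v).2 ⟨hva, hvb, hvc, h⟩)
          have hSf : (S.filter fun x => G.Adj x v = true) = ∅ := by
            apply Finset.filter_eq_empty_iff.2
            intro x hx
            have hx3 := hSsub hx
            simp only [mem_insert, mem_singleton] at hx3
            intro hadj
            rcases hx3 with rfl | rfl | rfl
            · exact boolne hadj hav
            · exact boolne (F1c v hva hvb hvc (F1b v hva hvb hvc hadj)) hav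
            · exact boolne (F1c v hva hvb hvc hadj) hav
          have hIu := hNotOutIn v hva hvb hvc hav
          have hindeg : G.inDeg v = (InF.filter fun x => G.Adj x v = true).card := by
            rw [SDigraph.inDeg, hIu]
          have hsub2 : (InF.filter fun x => G.Adj x v = true) ⊆ InF.erase v := by
            intro x hx
            simp only [mem_filter] at hx
            simp only [mem_erase]
            refine ⟨fun h => ?_, hx.1⟩
            subst h
            exact boolne hx.2 (G.irrefl _)
          have hle2 := Finset.card_le_card hsub2
          rw [hSf]
          simp only [Finset.card_empty]
          by_cases hvIn : v ∈ InF
          · rw [if_pos (by simp [hvIn])]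
            have h1 : 1 ≤ InF.card := Finset.card_pos.2 ⟨v, hvIn⟩
            rw [Finset.card_erase_of_mem hvIn] at hle2
            omega
          · rw [if_neg (by simp [hvIn, hvS])]
            rw [Finset.erase_eq_of_notMem hvIn] at hle2
            omega
      rw [key, sub_self]
    refine Eq.trans (Finset.sum_subset (Finset.subset_univ ({a, b, c} : Finset (Fin N)))
      (fun v _ hv => hzero v hv)).symm ?_
    apply Finset.sum_congr rfl
    intro v hv
    have hveq : v ∈ InF ∪ S ↔ v ∈ S := by
      simp only [mem_insert, mem_singleton] at hv
      simp only [Finset.mem_union]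
      constructor
      · rintro (h | h)
        · exact absurd h (hnotInabc v hv)
        · exact h
      · exact Or.inr
    congr 2
    exact if_congr hveq rfl rfl
  
  -- final computations
  have hinDa : G.inDeg a = l := (hG a).2
  have hinDb : G.inDeg b = l := by rw [(hG b).2, hdb]
  have hinDc : G.inDeg c = l := by rw [(hG c).2, hdc]
  have hll : InF.card = l - 1 := by omega
  have habc_sum : ∀ f : Fin N → ℤ,
      ∑ v ∈ ({a, b, c} : Finset (Fin N)), f v = f a + f b + f c := by
    intro f
    rw [Finset.sum_insert (by simp [hab, hac]), Finset.sum_insert (by simp [hbc]),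
      Finset.sum_singleton]
    ring
  have hcardT : ∀ (S : Finset (Fin N)), S ⊆ ({a, b, c} : Finset (Fin N)) →
      ∀ t : Fin N, t = a ∨ t = b ∨ t = c →
      ((InF ∪ S).filter fun x => G.Adj x t = true).card
        = InF.card + (S.filter fun x => G.Adj x t = true).card := by
    intro S hS t ht
    rw [Finset.filter_union,
      Finset.card_union_of_disjoint (Finset.disjoint_filter_filter (hdisjIS S hS)),
      hInFt t ht]
  have hs1 : slackBar dbar (l - 1) = 0 := by
    have h := hmain (l - 1) ∅ (by simp) (by simp; omega) hTeq1
    rw [h, habc_sum, hcardT ∅ (by simp) a (Or.inl rfl),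
      hcardT ∅ (by simp) b (Or.inr (Or.inl rfl)), hcardT ∅ (by simp) c (Or.inr (Or.inr rfl)),
      hinDa, hinDb, hinDc]
    simp only [Finset.filter_empty, Finset.card_empty, Finset.notMem_empty, if_false]
    omega
  have hS1sub : ({t1} : Finset (Fin N)) ⊆ ({a, b, c} : Finset (Fin N)) := by
    intro x hx
    rw [Finset.mem_singleton] at hx
    subst hx
    rcases ht1abc with rfl | rfl | rfl <;> simp
  have hs2 : slackBar dbar l = 1 := by
    have h := hmain l {t1} hS1sub (by rw [Finset.card_singleton]; omega) hTeq2
    rw [h, habc_sum, hcardT {t1} hS1sub a (Or.inl rfl),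
      hcardT {t1} hS1sub b (Or.inr (Or.inl rfl)), hcardT {t1} hS1sub c (Or.inr (Or.inr rfl)),
      hinDa, hinDb, hinDc]
    rcases ht1abc with rfl | rfl | rfl <;>
      · simp only [Finset.filter_singleton, Finset.mem_singleton, G.irrefl,
          e1, e2, e3, f1, f2, f3, if_true, if_false, Finset.card_empty, Finset.card_singleton,
          hab, hbc, hac, Ne.symm hab, Ne.symm hbc, Ne.symm hac, ite_true, ite_false,
          if_neg, if_pos]
        simp [hab, hbc, hac, Ne.symm hab, Ne.symm hbc, Ne.symm hac]
        omega
  have hS2sub : ({t1, t2} : Finset (Fin N)) ⊆ ({a, b, c} : Finset (Fin N)) := by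
    intro x hx
    rw [Finset.mem_insert, Finset.mem_singleton] at hx
    rcases hx with rfl | rfl
    · rcases ht1abc with rfl | rfl | rfl <;> simp
    · rcases ht2abc with rfl | rfl | rfl <;> simp
  have hS2card : ({t1, t2} : Finset (Fin N)).card = 2 := by
    rw [Finset.card_insert_of_notMem (by simp [ht12]), Finset.card_singleton]
  have hs3 : slackBar dbar (l + 1) = 1 := by
    have h := hmain (l + 1) {t1, t2} hS2sub (by rw [hS2card]; omega) hTeq3
    rw [h, habc_sum, hcardT {t1, t2} hS2sub a (Or.inl rfl),
      hcardT {t1, t2} hS2sub b (Or.inr (Or.inl rfl)),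
      hcardT {t1, t2} hS2sub c (Or.inr (Or.inr rfl)),
      hinDa, hinDb, hinDc]
    rcases ht1abc with rfl | rfl | rfl <;> rcases ht2abc with rfl | rfl | rfl <;>
        first
        | exact absurd rfl ht12
        | · simp only [Finset.filter_insert, Finset.filter_singleton, G.irrefl,
              e1, e2, e3, f1, f2, f3, ite_true, ite_false]
            simp [hab, hbc, hac, Ne.symm hab, Ne.symm hbc, Ne.symm hac]
            omega
  have hS3sub : ({a, b, c} : Finset (Fin N)) ⊆ ({a, b, c} : Finset (Fin N)) :=
    Finset.Subset.refl _
  have hS3card : ({a, b, c} : Finset (Fin N)).card = 3 := by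
    rw [Finset.card_insert_of_notMem (by simp [hab, hac]),
      Finset.card_insert_of_notMem (by simp [hbc]), Finset.card_singleton]
  have hs4 : slackBar dbar (l + 2) = 0 := by
    have h := hmain (l + 2) {a, b, c} hS3sub (by rw [hS3card]; omega) hTeq4
    rw [h, habc_sum, hcardT {a, b, c} hS3sub a (Or.inl rfl),
      hcardT {a, b, c} hS3sub b (Or.inr (Or.inl rfl)),
      hcardT {a, b, c} hS3sub c (Or.inr (Or.inr rfl)),
      hinDa, hinDb, hinDc]
    simp only [Finset.filter_insert, Finset.filter_singleton, G.irrefl,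
      e1, e2, e3, f1, f2, f3, ite_true, ite_false]
    simp [hab, hbc, hac, Ne.symm hab, Ne.symm hbc, Ne.symm hac]
    omega
  exact ⟨k, l, hda, hdb, hdc, hk1, hl1, hlN, dbar, hrearr, hPos, hmid, hs1, hs2, hs3, hs4⟩

lemma inducesC3_swap {V : Type} {G : SDigraph V} {u v w : V}
    (h : InducesC3 G u v w) : InducesC3 G u w v := by
  unfold InducesC3 at *
  tauto

lemma bar_half {N : ℕ} (d : Fin N → ℕ × ℕ) (hd : ∃ G : SDigraph (Fin N), Realizes G d)
    (a b c : Fin N) (hab : a ≠ b) (hbc : b ≠ c) (hac : a ≠ c)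
    (han : ∀ H : SDigraph (Fin N), Realizes H d → InducesC3 H a b c) :
    ∃ k l : ℕ, d a = (k, l) ∧ d b = (k, l) ∧ d c = (k, l) ∧ 1 ≤ k ∧ 1 ≤ l ∧ l + 2 ≤ N ∧
      ∃ dbar : Fin N → ℕ × ℕ, IsRearrangement d dbar ∧ PosOrdered dbar ∧
        (∀ j : Fin N, l - 1 ≤ (j : ℕ) → (j : ℕ) < l + 2 → dbar j = (k, l)) ∧
        slackBar dbar (l - 1) = 0 ∧ slackBar dbar l = 1 ∧
        slackBar dbar (l + 1) = 1 ∧ slackBar dbar (l + 2) = 0 := by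
  obtain ⟨G, hG⟩ := hd
  rcases han G hG with ⟨h1, h2, h3, h4, h5, h6⟩ | ⟨h1, h2, h3, h4, h5, h6⟩
  · exact bar_core d G hG a b c hab hbc hac han h1 h2 h3 h4 h5 h6
  · have han' : ∀ H : SDigraph (Fin N), Realizes H d → InducesC3 H a c b :=
      fun H hH => inducesC3_swap (han H hH)
    obtain ⟨k, l, hda, hdc, hdb, rest⟩ :=
      bar_core d G hG a c b hac (Ne.symm hbc) hab han' h3 h2 h1 h6 h5 h4
    exact ⟨k, l, hda, hdb, hdc, rest⟩

end AuxStatement14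

/-- degree-sequence criterion, necessity: if `d` is a
digraphic pair sequence and some three distinct coordinates induce a directed
3-cycle in every realization of `d`, then there are distinct coordinates
`j₁, j₂, j₃` and `(k,l) ≥ (1,1)` with `d_{j₁} = d_{j₂} = d_{j₃} = (k,l)`, the
(1-based) coordinates `l, l+1, l+2` of the positive ordering `d̄` and
`k, k+1, k+2` of the negative ordering `d̲` all equal to `(k,l)`, and slacks
`(s̄_{l-1}, s̄_l, s̄_{l+1}, s̄_{l+2}) = (0,1,1,0) =
(s̲_{k-1}, s̲_k, s̲_{k+1}, s̲_{k+2})`. -/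
theorem statement14 {N : ℕ} (d : Fin N → ℕ × ℕ)
    (hd : ∃ G : SDigraph (Fin N), Realizes G d)
    (hanchor : ∃ a b c : Fin N, a ≠ b ∧ b ≠ c ∧ a ≠ c ∧
      ∀ G : SDigraph (Fin N), Realizes G d → InducesC3 G a b c) :
    ∃ (j₁ j₂ j₃ : Fin N) (k l : ℕ),
      j₁ ≠ j₂ ∧ j₂ ≠ j₃ ∧ j₁ ≠ j₃ ∧ 1 ≤ k ∧ 1 ≤ l ∧
      ∃ (hlN : l + 1 < N) (hkN : k + 1 < N),
        d j₁ = (k, l) ∧ d j₂ = (k, l) ∧ d j₃ = (k, l) ∧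
        ∃ dbar dubar : Fin N → ℕ × ℕ,
          IsRearrangement d dbar ∧ PosOrdered dbar ∧
          IsRearrangement d dubar ∧ NegOrdered dubar ∧
          dbar ⟨l - 1, by omega⟩ = (k, l) ∧
          dbar ⟨l, by omega⟩ = (k, l) ∧ dbar ⟨l + 1, by omega⟩ = (k, l) ∧
          dubar ⟨k - 1, by omega⟩ = (k, l) ∧
          dubar ⟨k, by omega⟩ = (k, l) ∧ dubar ⟨k + 1, by omega⟩ = (k, l) ∧
          slackBar dbar (l - 1) = 0 ∧ slackBar dbar l = 1 ∧
          slackBar dbar (l + 1) = 1 ∧ slackBar dbar (l + 2) = 0 ∧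
          slackUbar dubar (k - 1) = 0 ∧ slackUbar dubar k = 1 ∧
          slackUbar dubar (k + 1) = 1 ∧ slackUbar dubar (k + 2) = 0 := by
  obtain ⟨a, b, c, hab, hbc, hac, han⟩ := hanchor
  obtain ⟨k, l, hda, hdb, hdc, hk1, hl1, hlN, dbar, hrearr, hPos, hmid, s1, s2, s3, s4⟩ :=
    bar_half d hd a b c hab hbc hac han
  have hd' : ∃ G : SDigraph (Fin N), Realizes G (fun v => ((d v).2, (d v).1)) := by
    obtain ⟨G, hG⟩ := hd
    exact ⟨G.rev, rev_realizes hG⟩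
  have han' : ∀ H : SDigraph (Fin N), Realizes H (fun v => ((d v).2, (d v).1)) →
      InducesC3 H a b c := by
    intro H hH
    have hrev : Realizes H.rev d := fun v => ⟨(hH v).2, (hH v).1⟩
    exact inducesC3_rev.1 (han H.rev hrev)
  obtain ⟨k', l', hda', hdb', hdc', hk1', hl1', hlN', dbar', hrearr', hPos', hmid',
    s1', s2', s3', s4'⟩ := bar_half _ hd' a b c hab hbc hac han'
  have hkl : l = k' ∧ k = l' := by
    have h := hda'
    rw [hda] at h
    simpa using h
  obtain ⟨rfl, rfl⟩ := hkl
  set dubar : Fin N → ℕ × ℕ := fun i => ((dbar' i).2, (dbar' i).1) with hdubar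
  have hdu_rearr : IsRearrangement d dubar := by
    obtain ⟨τ, hτ⟩ := hrearr'
    refine ⟨τ, fun i => ?_⟩
    rw [hdubar]
    simp only [hτ i]
  have hdu_neg : NegOrdered dubar := fun i j hij => hPos' i j hij
  have hslu : ∀ m : ℕ, slackUbar dubar m = slackBar dbar' m := fun m => rfl
  refine ⟨a, b, c, k, l, hab, hbc, hac, hk1, hl1, ⟨by omega, by omega, hda, hdb, hdc,
    dbar, dubar, hrearr, hPos, hdu_rearr, hdu_neg, ?_, ?_, ?_, ?_, ?_, ?_,
    s1, s2, s3, s4, ?_, ?_, ?_, ?_⟩⟩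
  · exact hmid ⟨l - 1, by omega⟩ (by show l - 1 ≤ l - 1; omega) (by show l - 1 < l + 2; omega)
  · exact hmid ⟨l, by omega⟩ (by show l - 1 ≤ l; omega) (by show l < l + 2; omega)
  · exact hmid ⟨l + 1, by omega⟩ (by show l - 1 ≤ l + 1; omega) (by show l + 1 < l + 2; omega)
  · show ((dbar' ⟨k - 1, by omega⟩).2, (dbar' ⟨k - 1, by omega⟩).1) = (k, l)
    rw [hmid' ⟨k - 1, by omega⟩ (by show k - 1 ≤ k - 1; omega) (by show k - 1 < k + 2; omega)]
  · show ((dbar' ⟨k, by omega⟩).2, (dbar' ⟨k, by omega⟩).1) = (k, l)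
    rw [hmid' ⟨k, by omega⟩ (by show k - 1 ≤ k; omega) (by show k < k + 2; omega)]
  · show ((dbar' ⟨k + 1, by omega⟩).2, (dbar' ⟨k + 1, by omega⟩).1) = (k, l)
    rw [hmid' ⟨k + 1, by omega⟩ (by show k - 1 ≤ k + 1; omega) (by show k + 1 < k + 2; omega)]
  · rw [hslu]; exact s1'
  · rw [hslu]; exact s2'
  · rw [hslu]; exact s3'
  · rw [hslu]; exact s4'
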